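/- Consider a multi-cell network with base stations i ∈ {1, …, N}, disjoint user sets J_i, channel gains g_{ij} > 0, noise power σ² > 0, bandwidth B > 0, rate demands D_{ij} > 0 and power limits P_i^max > 0. Define f_{ij}(m, p) = B·m_{ij}·log₂(1 + p_{ij}·g_{ij}/(Σ_{k≠i} Σ_{l∈J_k} m_{kl}·p_{kl}·g_{kj} + σ²)). Consider minimizing the total power Σ_{i} Σ_{j∈J_i} m_{ij}·p_{ij} over m, p ≥ 0 subject to f_{ij}(m, p) ≥ D_{ij} for all i, j, Σ_{j∈J_i} m_{ij}·p_{ij} ≤ P_i^max and Σ_{j∈J_i} m_{ij} ≤ 1 for all i. If this problem is feasible, then every optimal solution (m*, p*) satisfies f_{ij}(m*, p*) = D_{ij} for all i and j ∈ J_i (all rate constraints are tight) and Σ_{j∈J_i} m*_{ij} = 1 for all i (every cell operates at full load). -/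

import Mathlib

open Finset

/-- Achievable rate `f_{ij}(m, p)` of user `j` in cell `i` under the load-coupled
interference model: the interference from cell `k ≠ i` onto user `(i,j)` is the
time-averaged quantity `Σ_{l∈J_k} m_{kl}·p_{kl}·g_{k,(i,j)}`. Here `g k i j` is the
channel gain from base station `k` to user `j` of cell `i`. -/
noncomputable def loadCoupledRate (N : ℕ) (K : Fin N → ℕ) (B σ2 : ℝ)
    (g : Fin N → (i : Fin N) → Fin (K i) → ℝ)
    (m p : (i : Fin N) → Fin (K i) → ℝ) (i : Fin N) (j : Fin (K i)) : ℝ :=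
  B * m i j * Real.logb 2 (1 + p i j * g i i j /
    ((∑ k ∈ Finset.univ.erase i, ∑ l, m k l * p k l * g k i j) + σ2))

/-- Feasibility for the multi-cell sum power minimization problem: nonnegative time
fractions and powers, rate demands met, per-cell average power limits and per-cell
time budgets respected. -/
noncomputable def loadCoupledFeasible (N : ℕ) (K : Fin N → ℕ) (B σ2 : ℝ)
    (g : Fin N → (i : Fin N) → Fin (K i) → ℝ)
    (D : (i : Fin N) → Fin (K i) → ℝ) (Pmax : Fin N → ℝ)
    (m p : (i : Fin N) → Fin (K i) → ℝ) : Prop :=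
  (∀ i j, 0 ≤ m i j) ∧ (∀ i j, 0 ≤ p i j) ∧
  (∀ i j, D i j ≤ loadCoupledRate N K B σ2 g m p i j) ∧
  (∀ i, ∑ j, m i j * p i j ≤ Pmax i) ∧
  (∀ i, ∑ j, m i j ≤ 1)

/-- Interference-plus-noise seen by user `(i,j)`. -/
noncomputable def lcIntf (N : ℕ) (K : Fin N → ℕ) (σ2 : ℝ)
    (g : Fin N → (i : Fin N) → Fin (K i) → ℝ)
    (m p : (i : Fin N) → Fin (K i) → ℝ) (i : Fin N) (j : Fin (K i)) : ℝ :=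
  (∑ k ∈ Finset.univ.erase i, ∑ l, m k l * p k l * g k i j) + σ2

lemma lcRate_eq (N : ℕ) (K : Fin N → ℕ) (B σ2 : ℝ)
    (g : Fin N → (i : Fin N) → Fin (K i) → ℝ)
    (m p : (i : Fin N) → Fin (K i) → ℝ) (i : Fin N) (j : Fin (K i)) :
    loadCoupledRate N K B σ2 g m p i j =
      B * m i j * Real.logb 2 (1 + p i j * g i i j / lcIntf N K σ2 g m p i j) := rfl

lemma lcIntf_pos (N : ℕ) (K : Fin N → ℕ) (σ2 : ℝ) (hσ : 0 < σ2)
    (g : Fin N → (i : Fin N) → Fin (K i) → ℝ) (hg : ∀ k i j, 0 < g k i j)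
    (m p : (i : Fin N) → Fin (K i) → ℝ)
    (hm : ∀ i j, 0 ≤ m i j) (hp : ∀ i j, 0 ≤ p i j) (i : Fin N) (j : Fin (K i)) :
    0 < lcIntf N K σ2 g m p i j := by
  refine add_pos_of_nonneg_of_pos ?_ hσ
  refine Finset.sum_nonneg fun k _ => Finset.sum_nonneg fun l _ => ?_
  exact mul_nonneg (mul_nonneg (hm k l) (hp k l)) (hg k i j).le

lemma lcIntf_mono (N : ℕ) (K : Fin N → ℕ) (σ2 : ℝ)
    (g : Fin N → (i : Fin N) → Fin (K i) → ℝ) (hg : ∀ k i j, 0 < g k i j)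
    (m p m' p' : (i : Fin N) → Fin (K i) → ℝ)
    (hprod : ∀ k l, m' k l * p' k l ≤ m k l * p k l) (i : Fin N) (j : Fin (K i)) :
    lcIntf N K σ2 g m' p' i j ≤ lcIntf N K σ2 g m p i j := by
  unfold lcIntf
  have : ∀ k ∈ Finset.univ.erase i, (∑ l, m' k l * p' k l * g k i j)
      ≤ ∑ l, m k l * p k l * g k i j := fun k _ =>
    Finset.sum_le_sum fun l _ => mul_le_mul_of_nonneg_right (hprod k l) (hg k i j).le
  have := Finset.sum_le_sum this
  linarith

/-- At any feasible point, every time fraction and power is strictly positive. -/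
lemma lc_pos (N : ℕ) (K : Fin N → ℕ) (B σ2 : ℝ) (hB : 0 < B) (hσ : 0 < σ2)
    (g : Fin N → (i : Fin N) → Fin (K i) → ℝ) (hg : ∀ k i j, 0 < g k i j)
    (m p : (i : Fin N) → Fin (K i) → ℝ)
    (hm : ∀ i j, 0 ≤ m i j) (hp : ∀ i j, 0 ≤ p i j) (i : Fin N) (j : Fin (K i))
    (hrate : 0 < loadCoupledRate N K B σ2 g m p i j) :
    0 < m i j ∧ 0 < p i j ∧
      0 < Real.logb 2 (1 + p i j * g i i j / lcIntf N K σ2 g m p i j) := by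
  set I := lcIntf N K σ2 g m p i j with hIdef
  have hI : 0 < I := lcIntf_pos N K σ2 hσ g hg m p hm hp i j
  rw [lcRate_eq] at hrate
  set L := Real.logb 2 (1 + p i j * g i i j / I) with hLdef
  have hmpos : 0 < m i j := by
    rcases (hm i j).eq_or_lt with h | h
    · exfalso; rw [← h] at hrate; simp at hrate
    · exact h
  have hL : 0 < L := by nlinarith [mul_pos hB hmpos]
  have hnum : 0 ≤ p i j * g i i j / I :=
    div_nonneg (mul_nonneg (hp i j) (hg i i j).le) hI.le
  have hxpos : 0 < 1 + p i j * g i i j / I := by linarith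
  have hx1 : 1 < 1 + p i j * g i i j / I := (Real.logb_pos_iff one_lt_two hxpos).mp hL
  have h2 : 0 < p i j * g i i j / I := by linarith
  have h3 : 0 < p i j * g i i j := by
    have := mul_pos h2 hI
    rwa [div_mul_cancel₀ _ hI.ne'] at this
  have hppos : 0 < p i j := by nlinarith [hg i i j]
  exact ⟨hmpos, hppos, hL⟩

/-- Strict "time–power tradeoff" inequality. -/
lemma lc_mul_logb_lt (x y c : ℝ) (hx : 0 < x) (hxy : x < y) (hc : 0 < c) :
    x * Real.logb 2 (1 + c) < y * Real.logb 2 (1 + x * c / y) := by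
  have hy : 0 < y := hx.trans hxy
  have hr0 : 0 < x / y := div_pos hx hy
  have hr1 : x / y < 1 := (div_lt_one hy).mpr hxy
  have h1c : (1 + c : ℝ) ∈ Set.Ioi (0:ℝ) := by simp; linarith
  have h1 : (1 : ℝ) ∈ Set.Ioi (0:ℝ) := by simp
  have hne : (1 + c : ℝ) ≠ 1 := by linarith
  have hconc := strictConcaveOn_log_Ioi.2 h1c h1 hne hr0 (by linarith : (0:ℝ) < 1 - x / y)
      (by ring)
  simp only [smul_eq_mul, Real.log_one, mul_zero, mul_one, add_zero] at hconc
  have harg : x / y * (1 + c) + (1 - x / y) = 1 + x * c / y := by field_simp; ring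
  rw [harg] at hconc
  have hlog2 : (0:ℝ) < Real.log 2 := Real.log_pos one_lt_two
  have hdiv : x / y * Real.logb 2 (1 + c) < Real.logb 2 (1 + x * c / y) := by
    unfold Real.logb
    rw [← mul_div_assoc]
    exact (div_lt_div_iff_of_pos_right hlog2).mpr hconc
  have := mul_lt_mul_of_pos_left hdiv hy
  calc x * Real.logb 2 (1 + c) = y * (x / y * Real.logb 2 (1 + c)) := by
        field_simp
    _ < y * Real.logb 2 (1 + x * c / y) := this

/-- If a rate constraint is slack at a feasible point, the corresponding power can
be reduced, yielding a feasible point with strictly smaller total power. -/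
lemma lc_reduce (N : ℕ) (K : Fin N → ℕ) (B σ2 : ℝ) (hB : 0 < B) (hσ : 0 < σ2)
    (g : Fin N → (i : Fin N) → Fin (K i) → ℝ) (hg : ∀ k i j, 0 < g k i j)
    (D : (i : Fin N) → Fin (K i) → ℝ) (hD : ∀ i j, 0 < D i j) (Pmax : Fin N → ℝ)
    (m p : (i : Fin N) → Fin (K i) → ℝ)
    (hf : loadCoupledFeasible N K B σ2 g D Pmax m p)
    (i0 : Fin N) (j0 : Fin (K i0))
    (hslack : D i0 j0 < loadCoupledRate N K B σ2 g m p i0 j0) :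
    ∃ p', loadCoupledFeasible N K B σ2 g D Pmax m p' ∧
      ∑ i, ∑ j, m i j * p' i j < ∑ i, ∑ j, m i j * p i j := by
  obtain ⟨hm, hp, hr, hP, hT⟩ := hf
  have hrate0 : 0 < loadCoupledRate N K B σ2 g m p i0 j0 := (hD i0 j0).trans hslack
  obtain ⟨hmpos, hppos, hL⟩ := lc_pos N K B σ2 hB hσ g hg m p hm hp i0 j0 hrate0
  set I := lcIntf N K σ2 g m p i0 j0 with hIdef
  have hI : 0 < I := lcIntf_pos N K σ2 hσ g hg m p hm hp i0 j0
  set G := g i0 i0 j0 with hGdef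
  have hG : 0 < G := hg i0 i0 j0
  set L := Real.logb 2 (1 + p i0 j0 * G / I) with hLdef
  have hnum : 0 ≤ p i0 j0 * G / I := div_nonneg (mul_nonneg (hp i0 j0) hG.le) hI.le
  have hxpos : 0 < 1 + p i0 j0 * G / I := by linarith
  set e := D i0 j0 / (B * m i0 j0) with hedef
  have hBm : 0 < B * m i0 j0 := mul_pos hB hmpos
  have he : 0 < e := div_pos (hD i0 j0) hBm
  set E := (2:ℝ) ^ e with hEdef
  have hE1 : 1 < E := by
    rw [hEdef]
    exact (Real.one_lt_rpow_iff_of_pos two_pos).mpr (Or.inl ⟨one_lt_two, he⟩)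
  have hkey : e < L := by
    rw [hedef, div_lt_iff₀ hBm]
    rw [lcRate_eq] at hslack
    nlinarith
  have hEx : E < 1 + p i0 j0 * G / I := by
    have h2 : (2:ℝ) ^ L = 1 + p i0 j0 * G / I :=
      Real.rpow_logb two_pos (by norm_num) hxpos
    calc E < (2:ℝ) ^ L := by
            rw [hEdef]; exact (Real.rpow_lt_rpow_left_iff one_lt_two).mpr hkey
      _ = _ := h2
  set q := I * (E - 1) / G with hqdef
  have hq0 : 0 < q := div_pos (mul_pos hI (by linarith)) hG
  have hqlt : q < p i0 j0 := by
    rw [hqdef, div_lt_iff₀ hG]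
    have h1 : E - 1 < p i0 j0 * G / I := by linarith
    rw [lt_div_iff₀ hI] at h1
    linarith [mul_comm I (E - 1), mul_comm (E-1) I]
  set p' : (i : Fin N) → Fin (K i) → ℝ :=
    Function.update p i0 (Function.update (p i0) j0 q) with hp'def
  have hp'ne : ∀ i : Fin N, i ≠ i0 → p' i = p i := fun i h =>
    Function.update_of_ne h _ _
  have hp'i0 : p' i0 = Function.update (p i0) j0 q := Function.update_self _ _ _
  have hp'i0j0 : p' i0 j0 = q := by rw [hp'i0]; exact Function.update_self _ _ _
  have hp'i0j : ∀ j : Fin (K i0), j ≠ j0 → p' i0 j = p i0 j := by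
    intro j hj; rw [hp'i0]; exact Function.update_of_ne hj _ _
  have hple : ∀ i j, p' i j ≤ p i j := by
    intro i j
    rcases eq_or_ne i i0 with rfl | h
    · rcases eq_or_ne j j0 with rfl | hj
      · rw [hp'i0j0]; exact hqlt.le
      · rw [hp'i0j j hj]
    · rw [hp'ne i h]
  have hp'0 : ∀ i j, 0 ≤ p' i j := by
    intro i j
    rcases eq_or_ne i i0 with rfl | h
    · rcases eq_or_ne j j0 with rfl | hj
      · rw [hp'i0j0]; exact hq0.le
      · rw [hp'i0j j hj]; exact hp _ _
    · rw [hp'ne i h]; exact hp _ _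
  have hprodle : ∀ k l, m k l * p' k l ≤ m k l * p k l := fun k l =>
    mul_le_mul_of_nonneg_left (hple k l) (hm k l)
  have hIle : ∀ i j, lcIntf N K σ2 g m p' i j ≤ lcIntf N K σ2 g m p i j :=
    lcIntf_mono N K σ2 g hg m p m p' hprodle
  have hI'pos : ∀ i j, 0 < lcIntf N K σ2 g m p' i j :=
    lcIntf_pos N K σ2 hσ g hg m p' hm hp'0
  have hIeq : lcIntf N K σ2 g m p' i0 j0 = lcIntf N K σ2 g m p i0 j0 := by
    unfold lcIntf
    congr 1
    refine Finset.sum_congr rfl fun k hk => Finset.sum_congr rfl fun l _ => ?_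
    rw [hp'ne k (Finset.mem_erase.mp hk).1]
  have hmono : ∀ i j, p' i j = p i j → D i j ≤ loadCoupledRate N K B σ2 g m p' i j := by
    intro i j hpe
    refine le_trans (hr i j) ?_
    rw [lcRate_eq, lcRate_eq, hpe]
    have h0 : 0 ≤ p i j * g i i j := mul_nonneg (hp i j) (hg i i j).le
    have hold : 0 < lcIntf N K σ2 g m p i j :=
      lcIntf_pos N K σ2 hσ g hg m p hm hp i j
    have hdle : p i j * g i i j / lcIntf N K σ2 g m p i j
        ≤ p i j * g i i j / lcIntf N K σ2 g m p' i j :=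
      div_le_div_of_nonneg_left h0 (hI'pos i j) (hIle i j)
    have hposx : 0 < 1 + p i j * g i i j / lcIntf N K σ2 g m p i j := by
      have := div_nonneg h0 hold.le; linarith
    refine mul_le_mul_of_nonneg_left ?_ (mul_nonneg hB.le (hm i j))
    exact Real.logb_le_logb_of_le one_lt_two hposx (by linarith)
  have hrate' : ∀ i j, D i j ≤ loadCoupledRate N K B σ2 g m p' i j := by
    intro i j
    rcases eq_or_ne i i0 with rfl | h
    · rcases eq_or_ne j j0 with rfl | hj
      · rw [lcRate_eq, hIeq, hp'i0j0, ← hIdef, ← hGdef]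
        have h1 : 1 + q * G / I = E := by
          rw [hqdef]; field_simp; ring
        rw [h1, hEdef, Real.logb_rpow two_pos (by norm_num), hedef]
        have heq : B * m i j * (D i j / (B * m i j)) = D i j := by
          field_simp
        rw [heq]
      · exact hmono i j (hp'i0j j hj)
    · exact hmono i j (by rw [hp'ne i h])
  have hP' : ∀ i, ∑ j, m i j * p' i j ≤ Pmax i := fun i =>
    le_trans (Finset.sum_le_sum fun j _ => hprodle i j) (hP i)
  refine ⟨p', ⟨hm, hp'0, hrate', hP', hT⟩, ?_⟩
  refine Finset.sum_lt_sum (fun i _ => Finset.sum_le_sum fun j _ => hprodle i j)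
    ⟨i0, Finset.mem_univ _, ?_⟩
  refine Finset.sum_lt_sum (fun j _ => hprodle i0 j) ⟨j0, Finset.mem_univ _, ?_⟩
  rw [hp'i0j0]
  exact mul_lt_mul_of_pos_left hqlt hmpos

/-- Multi-cell sum power minimization with load coupling: if the problem is feasible,
then every optimal solution `(m*, p*)` has all rate constraints tight
(`f_{ij}(m*, p*) = D_{ij}` for all `i, j`) and every cell at full load
(`Σ_{j∈J_i} m*_{ij} = 1` for all `i`). -/
theorem stmt_10 (N : ℕ) (hN : 1 ≤ N) (K : Fin N → ℕ) (hK : ∀ i, 1 ≤ K i)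
    (B σ2 : ℝ) (hB : 0 < B) (hσ : 0 < σ2)
    (g : Fin N → (i : Fin N) → Fin (K i) → ℝ) (hg : ∀ k i j, 0 < g k i j)
    (D : (i : Fin N) → Fin (K i) → ℝ) (hD : ∀ i j, 0 < D i j)
    (Pmax : Fin N → ℝ) (hPmax : ∀ i, 0 < Pmax i)
    (mstar pstar : (i : Fin N) → Fin (K i) → ℝ)
    (hfeas : loadCoupledFeasible N K B σ2 g D Pmax mstar pstar)
    (hopt : ∀ m p : (i : Fin N) → Fin (K i) → ℝ,
      loadCoupledFeasible N K B σ2 g D Pmax m p →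
      ∑ i, ∑ j, mstar i j * pstar i j ≤ ∑ i, ∑ j, m i j * p i j) :
    (∀ i j, loadCoupledRate N K B σ2 g mstar pstar i j = D i j) ∧
    (∀ i, ∑ j, mstar i j = 1) := by
  have tight : ∀ i j, loadCoupledRate N K B σ2 g mstar pstar i j = D i j := by
    intro i j
    refine le_antisymm ?_ (hfeas.2.2.1 i j)
    by_contra hlt
    push_neg at hlt
    obtain ⟨p', hf', hobj⟩ := lc_reduce N K B σ2 hB hσ g hg D hD Pmax mstar pstar
      hfeas i j hlt
    exact absurd (hopt mstar p' hf') (not_le.mpr hobj)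
  refine ⟨tight, fun i0 => ?_⟩
  by_contra hne
  obtain ⟨hm, hp, hr, hP, hT⟩ := hfeas
  have hs : ∑ j, mstar i0 j < 1 := lt_of_le_of_ne (hT i0) hne
  set j0 : Fin (K i0) := ⟨0, hK i0⟩ with hj0def
  have hrate0 : 0 < loadCoupledRate N K B σ2 g mstar pstar i0 j0 := by
    rw [tight i0 j0]; exact hD i0 j0
  obtain ⟨hM, hPp, hL⟩ := lc_pos N K B σ2 hB hσ g hg mstar pstar hm hp i0 j0 hrate0
  set δ := 1 - ∑ j, mstar i0 j with hδdef
  have hδ : 0 < δ := by rw [hδdef]; linarith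
  set M := mstar i0 j0 with hMdef
  set P := pstar i0 j0 with hPdef
  have hMδ : 0 < M + δ := by linarith
  set m' : (i : Fin N) → Fin (K i) → ℝ :=
    Function.update mstar i0 (Function.update (mstar i0) j0 (M + δ)) with hm'def
  set p' : (i : Fin N) → Fin (K i) → ℝ :=
    Function.update pstar i0 (Function.update (pstar i0) j0 (M * P / (M + δ))) with hp'def
  have hm'ne : ∀ i : Fin N, i ≠ i0 → m' i = mstar i := fun i h =>
    Function.update_of_ne h _ _
  have hp'ne : ∀ i : Fin N, i ≠ i0 → p' i = pstar i := fun i h =>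
    Function.update_of_ne h _ _
  have hm'i0 : m' i0 = Function.update (mstar i0) j0 (M + δ) := Function.update_self _ _ _
  have hp'i0 : p' i0 = Function.update (pstar i0) j0 (M * P / (M + δ)) :=
    Function.update_self _ _ _
  have hm'i0j0 : m' i0 j0 = M + δ := by rw [hm'i0]; exact Function.update_self _ _ _
  have hp'i0j0 : p' i0 j0 = M * P / (M + δ) := by
    rw [hp'i0]; exact Function.update_self _ _ _
  have hm'i0j : ∀ j : Fin (K i0), j ≠ j0 → m' i0 j = mstar i0 j := by
    intro j hj; rw [hm'i0]; exact Function.update_of_ne hj _ _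
  have hp'i0j : ∀ j : Fin (K i0), j ≠ j0 → p' i0 j = pstar i0 j := by
    intro j hj; rw [hp'i0]; exact Function.update_of_ne hj _ _
  have hprodeq : ∀ k l, m' k l * p' k l = mstar k l * pstar k l := by
    intro k l
    rcases eq_or_ne k i0 with rfl | h
    · rcases eq_or_ne l j0 with rfl | hl
      · rw [hm'i0j0, hp'i0j0]; field_simp; rfl
      · rw [hm'i0j l hl, hp'i0j l hl]
    · rw [hm'ne k h, hp'ne k h]
  have hIeq : ∀ i j, lcIntf N K σ2 g m' p' i j = lcIntf N K σ2 g mstar pstar i j := by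
    intro i j
    unfold lcIntf
    congr 1
    exact Finset.sum_congr rfl fun k _ => Finset.sum_congr rfl fun l _ => by
      rw [hprodeq]
  have hm'0 : ∀ i j, 0 ≤ m' i j := by
    intro i j
    rcases eq_or_ne i i0 with rfl | h
    · rcases eq_or_ne j j0 with rfl | hj
      · rw [hm'i0j0]; linarith
      · rw [hm'i0j j hj]; exact hm _ _
    · rw [hm'ne i h]; exact hm _ _
  have hp'0 : ∀ i j, 0 ≤ p' i j := by
    intro i j
    rcases eq_or_ne i i0 with rfl | h
    · rcases eq_or_ne j j0 with rfl | hj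
      · rw [hp'i0j0]
        exact div_nonneg (mul_nonneg hM.le hPp.le) hMδ.le
      · rw [hp'i0j j hj]; exact hp _ _
    · rw [hp'ne i h]; exact hp _ _
  -- the rate at (i0, j0) strictly increases
  set I := lcIntf N K σ2 g mstar pstar i0 j0 with hIdef
  have hI : 0 < I := lcIntf_pos N K σ2 hσ g hg mstar pstar hm hp i0 j0
  set G := g i0 i0 j0 with hGdef
  have hG : 0 < G := hg i0 i0 j0
  set c := P * G / I with hcdef
  have hc : 0 < c := div_pos (mul_pos hPp hG) hI
  have hslack' : D i0 j0 < loadCoupledRate N K B σ2 g m' p' i0 j0 := by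
    have hold : loadCoupledRate N K B σ2 g mstar pstar i0 j0 =
        B * (M * Real.logb 2 (1 + c)) := by
      rw [lcRate_eq, ← hIdef, ← hGdef, ← hMdef, ← hPdef, ← hcdef]; ring
    have hnew : loadCoupledRate N K B σ2 g m' p' i0 j0 =
        B * ((M + δ) * Real.logb 2 (1 + M * c / (M + δ))) := by
      rw [lcRate_eq, hIeq i0 j0, ← hIdef, ← hGdef, hm'i0j0, hp'i0j0]
      have harg : M * P / (M + δ) * G / I = M * c / (M + δ) := by
        rw [hcdef]; field_simp
      rw [harg]; ring
    have hlt := lc_mul_logb_lt M (M + δ) c hM (by linarith) hc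
    have := mul_lt_mul_of_pos_left hlt hB
    calc D i0 j0 ≤ loadCoupledRate N K B σ2 g mstar pstar i0 j0 := hr i0 j0
      _ = B * (M * Real.logb 2 (1 + c)) := hold
      _ < B * ((M + δ) * Real.logb 2 (1 + M * c / (M + δ))) := this
      _ = loadCoupledRate N K B σ2 g m' p' i0 j0 := hnew.symm
  -- feasibility of (m', p')
  have hrate' : ∀ i j, D i j ≤ loadCoupledRate N K B σ2 g m' p' i j := by
    intro i j
    rcases eq_or_ne i i0 with rfl | h
    · rcases eq_or_ne j j0 with rfl | hj
      · exact hslack'.le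
      · rw [lcRate_eq, hIeq, hm'i0j j hj, hp'i0j j hj, ← lcRate_eq]
        exact hr i j
    · rw [lcRate_eq, hIeq, hm'ne i h, hp'ne i h, ← lcRate_eq]
      exact hr i j
  have hsum_eq : ∀ i, ∑ j, m' i j * p' i j = ∑ j, mstar i j * pstar i j := fun i =>
    Finset.sum_congr rfl fun j _ => hprodeq i j
  have hP' : ∀ i, ∑ j, m' i j * p' i j ≤ Pmax i := fun i => (hsum_eq i) ▸ hP i
  have hT' : ∀ i, ∑ j, m' i j ≤ 1 := by
    intro i
    rcases eq_or_ne i i0 with rfl | h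
    · have hsum : ∑ j, m' i j = 1 := by
        rw [hm'i0, Finset.sum_update_of_mem (Finset.mem_univ j0)]
        have h2 := Finset.add_sum_erase Finset.univ (mstar i) (Finset.mem_univ j0)
        rw [Finset.erase_eq] at h2
        rw [← hMdef] at h2
        rw [hδdef]
        linarith
      rw [hsum]
    · rw [hm'ne i h]; exact hT i
  have hfeas' : loadCoupledFeasible N K B σ2 g D Pmax m' p' :=
    ⟨hm'0, hp'0, hrate', hP', hT'⟩
  obtain ⟨p'', hf'', hobj⟩ := lc_reduce N K B σ2 hB hσ g hg D hD Pmax m' p'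
    hfeas' i0 j0 hslack'
  have h1 : ∑ i, ∑ j, m' i j * p' i j = ∑ i, ∑ j, mstar i j * pstar i j :=
    Finset.sum_congr rfl fun i _ => hsum_eq i
  have h2 := hopt m' p'' hf''
  linarith
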